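/- arXiv:1912.09873 — 2 statements merged into one kernel-verified Lean document; each statement's English description precedes it below -/
import Mathlib

section
/- Let π ∈ NC(2n) be an even non-crossing partition (viewed as a permutation by writing each block in increasing order) such that γ_{2n}π⁻¹ fixes every odd number, where γ_{2n} = (1,2,…,2n). Then there exists σ ∈ NC(n) with π = σ̂, the double of σ, given by 2σ(k) = π²(2k). Conversely, for any σ ∈ NC(n), the double σ̂ is even and γ_{2n}σ̂⁻¹ fixes every odd number. -/
open Equiv Finset
open scoped Classical

noncomputable section

def numCycles {n : ℕ} (π : Equiv.Perm (Fin n)) : ℕ :=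
  π.cycleType.card + (univ.filter fun x => π x = x).card

def plen {n : ℕ} (π : Equiv.Perm (Fin n)) : ℕ := n - numCycles π

def gammaPQ (p q : ℕ) : Equiv.Perm (Fin (p + q)) :=
  finSumFinEquiv.permCongr (Equiv.sumCongr (finRotate p) (finRotate q))

def cycleLen {n : ℕ} (π : Equiv.Perm (Fin n)) (k : Fin n) : ℕ :=
  (univ.filter fun m => π.SameCycle k m).card

def Separates {n : ℕ} (σ : Equiv.Perm (Fin n)) (A : Finset (Fin n)) : Prop :=
  ∀ a ∈ A, ∀ b ∈ A, σ.SameCycle a b → a = b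

def oddSet (n : ℕ) : Finset (Fin n) := univ.filter fun i => Odd (i.val + 1)

def IsSNC (p q : ℕ) (π : Equiv.Perm (Fin (p + q))) : Prop :=
  (∃ i j, π.SameCycle i j ∧ ¬ (gammaPQ p q).SameCycle i j) ∧
    numCycles π + numCycles (gammaPQ p q * π⁻¹) = p + q

def SameParity {n : ℕ} (a b : Fin n) : Prop := (Odd (a.val + 1) ↔ Odd (b.val + 1))

def EvenCycles {n : ℕ} (π : Equiv.Perm (Fin n)) : Prop := ∀ k, Even (cycleLen π k)

def ParityReversing {n : ℕ} (π : Equiv.Perm (Fin n)) : Prop := ∀ k, ¬ SameParity k (π k)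

def SNCminus (p q : ℕ) (π : Equiv.Perm (Fin (p + q))) : Prop :=
  IsSNC p q π ∧ EvenCycles π ∧ ParityReversing π

end

/-- Biane's characterization: π is a non-crossing permutation. -/
def IsNC {n : ℕ} (π : Equiv.Perm (Fin n)) : Prop :=
  plen (finRotate n) = plen π + plen (π⁻¹ * finRotate n)

/-- The element "2k" of {1,…,2n} corresponding to k ∈ {1,…,n} (labels are val+1). -/
noncomputable def dbl2 {n : ℕ} (k : Fin n) : Fin (2*n) :=
  ⟨2 * k.val + 1, by have := k.isLt; omega⟩

/-- π is the double σ̂ of σ: π(2k) = γ_{2n}(2k) on even labels and π²(2k) = 2σ(k). -/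
def IsDouble {n : ℕ} (σ : Equiv.Perm (Fin n)) (π : Equiv.Perm (Fin (2*n))) : Prop :=
  (∀ j : Fin (2*n), Even (j.val + 1) → π j = finRotate (2*n) j) ∧
  (∀ k : Fin n, (π ^ 2) (dbl2 k) = dbl2 (σ k))


namespace MyAux

variable {N n : ℕ}


variable {N n : ℕ}

def orb (π : Equiv.Perm (Fin N)) (x : Fin N) : Finset (Fin N) :=
  univ.filter fun y => π.SameCycle x y

lemma mem_orb {π : Equiv.Perm (Fin N)} {x y : Fin N} : y ∈ orb π x ↔ π.SameCycle x y := by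
  simp [orb]

lemma orb_eq_iff {π : Equiv.Perm (Fin N)} {x y : Fin N} :
    orb π x = orb π y ↔ π.SameCycle x y := by
  constructor
  · intro h
    have : y ∈ orb π y := mem_orb.2 (Equiv.Perm.SameCycle.refl _ _)
    rw [← h] at this
    exact mem_orb.1 this
  · intro h
    ext z
    simp only [mem_orb]
    exact ⟨fun hz => (h.symm).trans hz, fun hz => h.trans hz⟩

lemma sameCycle_iff_pow {π : Equiv.Perm (Fin N)} {x y : Fin N} :
    π.SameCycle x y ↔ ∃ m : ℕ, (π ^ m) x = y := by
  constructor
  · intro h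
    obtain ⟨i, _, hi⟩ := h.exists_pow_eq'
    exact ⟨i, hi⟩
  · rintro ⟨m, hm⟩
    exact ⟨(m : ℤ), by simpa using hm⟩

lemma numCycles_eq (π : Equiv.Perm (Fin N)) :
    numCycles π = (univ.image (orb π)).card := by
  classical
  have hct : π.cycleType.card = π.cycleFactorsFinset.card := by
    simp [Equiv.Perm.cycleType_def]
  -- orbit of a fixed point
  have horbfix : ∀ x : Fin N, π x = x → orb π x = {x} := by
    intro x hx
    ext z
    simp only [mem_orb, Finset.mem_singleton]
    constructor
    · intro h
      obtain ⟨m, hm⟩ := sameCycle_iff_pow.1 h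
      have : (π ^ m) x = x := Function.IsFixedPt.perm_pow hx m
      rw [hm] at this
      exact this
    · rintro rfl; exact Equiv.Perm.SameCycle.refl _ _
  -- orbit of a support point
  have horbsupp : ∀ x : Fin N, x ∈ π.support → orb π x = (π.cycleOf x).support := by
    intro x hx
    ext z
    rw [mem_orb, Equiv.Perm.mem_support_cycleOf_iff]
    exact ⟨fun h => ⟨h, hx⟩, fun h => h.1⟩
  have hsplit : (univ : Finset (Fin N)) = π.support ∪ (univ.filter fun x => π x = x) := by
    ext x
    simp [Equiv.Perm.mem_support, em (π x = x), or_comm]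
  have himg : univ.image (orb π) =
      (π.support.image (orb π)) ∪ ((univ.filter fun x => π x = x).image (orb π)) := by
    rw [← Finset.image_union, ← hsplit]
  rw [himg]
  have hdisj : Disjoint (π.support.image (orb π)) ((univ.filter fun x => π x = x).image (orb π)) := by
    rw [Finset.disjoint_left]
    rintro A hA hB
    obtain ⟨x, hx, rfl⟩ := Finset.mem_image.1 hA
    obtain ⟨y, hy, hyA⟩ := Finset.mem_image.1 hB
    have hy' : π y = y := (Finset.mem_filter.1 hy).2
    rw [horbfix y hy'] at hyA
    have hxy : x ∈ ({y} : Finset (Fin N)) := by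
      rw [hyA]; exact mem_orb.2 (Equiv.Perm.SameCycle.refl _ _)
    have hxx : π x ∈ ({y} : Finset (Fin N)) := by
      rw [hyA]; exact mem_orb.2 ⟨1, by simp⟩
    simp only [Finset.mem_singleton] at hxy hxx
    exact (Equiv.Perm.mem_support.1 hx) (by rw [hxx, hxy])
  rw [Finset.card_union_of_disjoint hdisj]
  unfold numCycles
  rw [hct]
  congr 1
  · -- support part
    have : π.support.image (orb π) = π.cycleFactorsFinset.image Equiv.Perm.support := by
      apply Finset.Subset.antisymm
      · intro A hA
        obtain ⟨x, hx, rfl⟩ := Finset.mem_image.1 hA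
        refine Finset.mem_image.2 ⟨π.cycleOf x, ?_, (horbsupp x hx).symm⟩
        exact Equiv.Perm.cycleOf_mem_cycleFactorsFinset_iff.2 hx
      · intro A hA
        obtain ⟨c, hc, rfl⟩ := Finset.mem_image.1 hA
        have hcyc : c.IsCycle := (Equiv.Perm.mem_cycleFactorsFinset_iff.1 hc).1
        obtain ⟨x, hx⟩ := hcyc.nonempty_support
        have hceq : c = π.cycleOf x := Equiv.Perm.cycle_is_cycleOf hx hc
        have hxs : x ∈ π.support := Equiv.Perm.mem_cycleFactorsFinset_support_le hc hx
        refine Finset.mem_image.2 ⟨x, hxs, ?_⟩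
        rw [horbsupp x hxs, hceq]
    rw [this]
    refine (Finset.card_image_of_injOn ?_).symm
    intro c hc d hd hcd
    have hcyc : c.IsCycle := (Equiv.Perm.mem_cycleFactorsFinset_iff.1 hc).1
    obtain ⟨x, hx⟩ := hcyc.nonempty_support
    have hx' : x ∈ d.support := by rw [← hcd]; exact hx
    rw [Equiv.Perm.cycle_is_cycleOf hx hc, Equiv.Perm.cycle_is_cycleOf hx' hd]
  · -- fixed part
    refine (Finset.card_image_of_injOn ?_).symm
    intro x hx y hy hxy
    rw [horbfix x (Finset.mem_filter.1 hx).2, horbfix y (Finset.mem_filter.1 hy).2] at hxy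
    exact Finset.singleton_injective hxy

lemma numCycles_le (π : Equiv.Perm (Fin N)) : numCycles π ≤ N := by
  rw [numCycles_eq]
  calc (univ.image (orb π)).card ≤ (univ : Finset (Fin N)).card := Finset.card_image_le
  _ = N := by simp

lemma card_image_congr {α β γ : Type*} [Fintype α] [DecidableEq β] [DecidableEq γ]
    {f : α → β} {g : α → γ} (h : ∀ a b : α, f a = f b ↔ g a = g b) :
    (univ.image f).card = (univ.image g).card := by
  classical
  apply Finset.card_bij (fun b hb => g (Finset.mem_image.1 hb).choose)
  · intro b hb
    exact Finset.mem_image.2 ⟨_, Finset.mem_univ _, rfl⟩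
  · intro b1 hb1 b2 hb2 heq
    have h1 := (Finset.mem_image.1 hb1).choose_spec.2
    have h2 := (Finset.mem_image.1 hb2).choose_spec.2
    rw [← h1, ← h2]
    exact (h _ _).2 heq
  · intro c hc
    obtain ⟨a, _, rfl⟩ := Finset.mem_image.1 hc
    refine ⟨f a, Finset.mem_image.2 ⟨a, Finset.mem_univ _, rfl⟩, ?_⟩
    have h1 := (Finset.mem_image.1 (Finset.mem_image.2 ⟨a, Finset.mem_univ a, rfl⟩ :
      f a ∈ univ.image f)).choose_spec.2
    exact (h _ _).1 h1

lemma pow_transfer {π : Equiv.Perm (Fin N)} {ρ : Equiv.Perm (Fin n)} {e : Fin n → Fin N}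
    (hcomm : ∀ k, π (e k) = e (ρ k)) (m : ℕ) (k : Fin n) :
    (π ^ m) (e k) = e ((ρ ^ m) k) := by
  induction m with
  | zero => simp
  | succ m ih =>
    rw [pow_succ', pow_succ']
    simp only [Equiv.Perm.mul_apply]
    rw [ih, hcomm]

lemma numCycles_split (τ : Equiv.Perm (Fin N)) (ρ : Equiv.Perm (Fin n)) (e : Fin n → Fin N)
    (he : Function.Injective e) (hcomm : ∀ k, τ (e k) = e (ρ k))
    (hfix : ∀ x : Fin N, (∀ k, x ≠ e k) → τ x = x) :
    numCycles τ = (N - n) + numCycles ρ := by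
  classical
  have htrans : ∀ (a b : Fin n), τ.SameCycle (e a) (e b) ↔ ρ.SameCycle a b := by
    intro a b
    rw [sameCycle_iff_pow, sameCycle_iff_pow]
    constructor
    · rintro ⟨m, hm⟩
      rw [pow_transfer hcomm] at hm
      exact ⟨m, he hm⟩
    · rintro ⟨m, hm⟩
      exact ⟨m, by rw [pow_transfer hcomm, hm]⟩
  have hR : (univ.filter fun x : Fin N => ∃ k, x = e k) = univ.image e := by
    ext x; simp [eq_comm]
  have hsplit : (univ : Finset (Fin N)) =
      (univ.filter fun x : Fin N => ∃ k, x = e k) ∪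
      (univ.filter fun x : Fin N => ¬ ∃ k, x = e k) :=
    (Finset.filter_union_filter_not_eq _ _).symm
  rw [numCycles_eq, hsplit, Finset.image_union]
  have horbfix : ∀ x : Fin N, (¬ ∃ k, x = e k) → orb τ x = {x} := by
    intro x hx
    have hfx : τ x = x := hfix x (by push_neg at hx; exact hx)
    ext z
    simp only [mem_orb, Finset.mem_singleton]
    constructor
    · intro h
      obtain ⟨m, hm⟩ := sameCycle_iff_pow.1 h
      have : (τ ^ m) x = x := Function.IsFixedPt.perm_pow hfx m
      rw [hm] at this
      exact this
    · rintro rfl; exact Equiv.Perm.SameCycle.refl _ _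
  have hdisj : Disjoint ((univ.filter fun x : Fin N => ∃ k, x = e k).image (orb τ))
      ((univ.filter fun x : Fin N => ¬ ∃ k, x = e k).image (orb τ)) := by
    rw [Finset.disjoint_left]
    rintro A hA hB
    obtain ⟨x, hx, rfl⟩ := Finset.mem_image.1 hA
    obtain ⟨y, hy, hyA⟩ := Finset.mem_image.1 hB
    obtain ⟨k, rfl⟩ := (Finset.mem_filter.1 hx).2
    have hy' := (Finset.mem_filter.1 hy).2
    rw [horbfix y hy'] at hyA
    have : e k ∈ ({y} : Finset (Fin N)) := by
      rw [hyA]; exact mem_orb.2 (Equiv.Perm.SameCycle.refl _ _)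
    simp only [Finset.mem_singleton] at this
    exact (hy' ⟨k, this.symm⟩)
  rw [Finset.card_union_of_disjoint hdisj]
  have h2 : ((univ.filter fun x : Fin N => ¬ ∃ k, x = e k).image (orb τ)).card = N - n := by
    rw [Finset.card_image_of_injOn (fun x hx y hy hxy => by
      rw [horbfix x (Finset.mem_filter.1 hx).2, horbfix y (Finset.mem_filter.1 hy).2] at hxy
      exact Finset.singleton_injective hxy)]
    have := Finset.card_filter_add_card_filter_not
      (s := (univ : Finset (Fin N))) (p := fun x : Fin N => ∃ k, x = e k)
    have hcard : (univ.filter fun x : Fin N => ∃ k, x = e k).card = n := by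
      rw [hR, Finset.card_image_of_injective _ he, Finset.card_univ, Fintype.card_fin]
    simp only [Finset.card_univ, Fintype.card_fin] at this
    omega
  have h1 : ((univ.filter fun x : Fin N => ∃ k, x = e k).image (orb τ)).card = numCycles ρ := by
    rw [hR, Finset.image_image]
    rw [numCycles_eq]
    exact card_image_congr (fun a b => by
      rw [Function.comp_apply, Function.comp_apply, orb_eq_iff, orb_eq_iff, htrans])
  rw [h1, h2]
  omega

lemma numCycles_double (π : Equiv.Perm (Fin N)) (σ : Equiv.Perm (Fin n)) (d : Fin n → Fin N)
    (hd : Function.Injective d) (hcomm : ∀ k, π (π (d k)) = d (σ k))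
    (hmeet : ∀ x : Fin N, ∃ k, π.SameCycle x (d k))
    (hodd : ∀ (m : ℕ) (k j : Fin n), (π ^ (2 * m + 1)) (d k) ≠ d j) :
    numCycles π = numCycles σ := by
  classical
  have hc2 : ∀ k, (π ^ 2) (d k) = d (σ k) := by
    intro k; rw [pow_two]; exact hcomm k
  have hpow : ∀ (t : ℕ) (k : Fin n), (π ^ (2 * t)) (d k) = d ((σ ^ t) k) := by
    intro t k
    have := pow_transfer (π := π ^ 2) (ρ := σ) (e := d) hc2 t k
    rwa [← pow_mul, mul_comm 2 t, mul_comm t 2] at this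
  have htrans : ∀ (a b : Fin n), π.SameCycle (d a) (d b) ↔ σ.SameCycle a b := by
    intro a b
    rw [sameCycle_iff_pow, sameCycle_iff_pow]
    constructor
    · rintro ⟨m, hm⟩
      rcases Nat.even_or_odd m with ⟨t, rfl⟩ | ⟨t, rfl⟩
      · rw [show t + t = 2 * t by ring, hpow] at hm
        exact ⟨t, hd hm⟩
      · exact absurd hm (hodd t a b)
    · rintro ⟨m, hm⟩
      exact ⟨2 * m, by rw [hpow, hm]⟩
  rw [numCycles_eq, numCycles_eq]
  have himg : univ.image (orb π) = univ.image (orb π ∘ d) := by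
    apply Finset.Subset.antisymm
    · intro A hA
      obtain ⟨x, _, rfl⟩ := Finset.mem_image.1 hA
      obtain ⟨k, hk⟩ := hmeet x
      exact Finset.mem_image.2 ⟨k, Finset.mem_univ _, by
        rw [Function.comp_apply, orb_eq_iff]; exact hk.symm⟩
    · intro A hA
      obtain ⟨k, _, rfl⟩ := Finset.mem_image.1 hA
      exact Finset.mem_image.2 ⟨d k, Finset.mem_univ _, rfl⟩
  rw [himg]
  exact card_image_congr (fun a b => by
    rw [Function.comp_apply, Function.comp_apply, orb_eq_iff, orb_eq_iff, htrans])

lemma numCycles_finRotate {m : ℕ} (hm : 1 ≤ m) : numCycles (finRotate m) = 1 := by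
  classical
  match m, hm with
  | 1, _ =>
    unfold numCycles
    rw [finRotate_one]
    norm_num [Equiv.Perm.cycleType_one]
    rfl
  | (m + 2), _ =>
    unfold numCycles
    rw [(isCycle_finRotate (n := m)).cycleType]
    have : (univ.filter fun x : Fin (m + 2) => finRotate (m + 2) x = x) = ∅ := by
      ext x
      simp only [Finset.mem_filter, Finset.notMem_empty, iff_false, not_and]
      intro _
      have := support_finRotate (n := m)
      intro hfx
      have : x ∈ Equiv.Perm.support (finRotate (m + 2)) := by rw [this]; exact Finset.mem_univ x
      exact (Equiv.Perm.mem_support.1 this) hfx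
    rw [this]
    simp

lemma evenCycles_of_flip (π : Equiv.Perm (Fin N))
    (hflip : ∀ x : Fin N, Odd x.val ↔ ¬ Odd (π x).val) :
    ∀ k : Fin N, Even ((univ.filter fun m => π.SameCycle k m).card) := by
  intro k
  classical
  set S := univ.filter fun m => π.SameCycle k m with hS
  have hcard : (S.filter fun x => Odd x.val).card = (S.filter fun x => ¬ Odd x.val).card := by
    apply Finset.card_bij (fun x _ => π x)
    · intro x hx
      rw [Finset.mem_filter] at hx ⊢
      obtain ⟨hxS, hxodd⟩ := hx
      rw [hS, Finset.mem_filter] at hxS ⊢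
      refine ⟨⟨Finset.mem_univ _, ?_⟩, (hflip x).1 hxodd⟩
      exact Equiv.Perm.sameCycle_apply_right.2 hxS.2
    · intro x _ y _ hxy
      exact π.injective hxy
    · intro y hy
      rw [Finset.mem_filter] at hy
      obtain ⟨hyS, hyev⟩ := hy
      rw [hS, Finset.mem_filter] at hyS
      refine ⟨π⁻¹ y, ?_, by simp⟩
      rw [Finset.mem_filter, hS, Finset.mem_filter]
      constructor
      · constructor
        · exact Finset.mem_univ _
        · have := hyS.2
          have h2 : π.SameCycle k (π (π⁻¹ y)) := by simpa using this
          exact Equiv.Perm.sameCycle_apply_right.1 h2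
      · by_contra hc
        exact hc ((hflip (π⁻¹ y)).2 (by simpa using hyev))
  have := Finset.card_filter_add_card_filter_not (s := S) (p := fun x : Fin N => Odd x.val)
  refine ⟨(S.filter fun x => Odd x.val).card, by omega⟩



lemma finRotate_val {m : ℕ} (x : Fin m) : (finRotate m x).val = (x.val + 1) % m := by
  cases m with
  | zero => exact x.elim0
  | succ m' =>
    rw [finRotate_succ_apply, Fin.val_add, Fin.val_one']
    rw [Nat.add_mod_mod]

noncomputable def wd {n : ℕ} (k : Fin n) : Fin (2*n) := finRotate (2*n) (dbl2 k)

lemma wd_val {n : ℕ} (k : Fin n) : (wd k).val = 2 * ((k.val + 1) % n) := by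
  have : (wd k).val = (2 * k.val + 1 + 1) % (2 * n) := finRotate_val (dbl2 k)
  rw [this, show 2 * k.val + 1 + 1 = 2 * (k.val + 1) by ring, Nat.mul_mod_mul_left]

lemma dbl2_val {n : ℕ} (k : Fin n) : (dbl2 k).val = 2 * k.val + 1 := rfl

lemma wd_val_lt {n : ℕ} (k : Fin n) : (k.val + 1) % n < n :=
  Nat.mod_lt _ (by have := k.isLt; omega)

lemma dbl2_ne_wd {n : ℕ} (k j : Fin n) : dbl2 k ≠ wd j := by
  intro h
  have := congrArg Fin.val h
  rw [dbl2_val, wd_val] at this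
  omega

lemma dbl2_injective {n : ℕ} : Function.Injective (dbl2 (n := n)) := by
  intro a b h
  have := congrArg Fin.val h
  rw [dbl2_val, dbl2_val] at this
  exact Fin.ext (by omega)

lemma wd_injective {n : ℕ} : Function.Injective (wd (n := n)) :=
  fun a b h => dbl2_injective ((finRotate (2*n)).injective h)

lemma coverage {n : ℕ} (x : Fin (2*n)) : (∃ k, x = dbl2 k) ∨ (∃ k, x = wd k) := by
  have hx := x.isLt
  have hn : 1 ≤ n := by omega
  rcases Nat.even_or_odd x.val with ⟨t, ht⟩ | ⟨t, ht⟩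
  · right
    rcases Nat.eq_zero_or_pos t with ht0 | ht0
    · refine ⟨⟨n - 1, by omega⟩, Fin.ext ?_⟩
      rw [wd_val]
      simp only
      rw [show n - 1 + 1 = n by omega, Nat.mod_self]
      omega
    · refine ⟨⟨t - 1, by omega⟩, Fin.ext ?_⟩
      rw [wd_val]
      simp only
      rw [show t - 1 + 1 = t by omega, Nat.mod_eq_of_lt (by omega)]
      omega
  · left
    exact ⟨⟨t, by omega⟩, Fin.ext (by rw [dbl2_val]; simp only; omega)⟩

lemma gamma_wd {n : ℕ} (k : Fin n) : finRotate (2*n) (wd k) = dbl2 (finRotate n k) := by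
  apply Fin.ext
  rw [finRotate_val, wd_val, dbl2_val, finRotate_val]
  have h1 : (k.val + 1) % n < n := wd_val_lt k
  rw [Nat.mod_eq_of_lt (by omega)]


end MyAux


theorem stmt17 (n : ℕ) :
    (∀ π : Equiv.Perm (Fin (2*n)), IsNC π → EvenCycles π →
      (∀ j : Fin (2*n), Odd (j.val + 1) → (finRotate (2*n) * π⁻¹) j = j) →
      ∃ σ : Equiv.Perm (Fin n), IsNC σ ∧ IsDouble σ π) ∧
    (∀ σ : Equiv.Perm (Fin n), IsNC σ → ∀ π : Equiv.Perm (Fin (2*n)), IsDouble σ π →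
      EvenCycles π ∧
        (∀ j : Fin (2*n), Odd (j.val + 1) → (finRotate (2*n) * π⁻¹) j = j)) := by
  classical
  constructor
  · -- forward direction
    intro π hNC _hEC hfixhyp
    rcases Nat.eq_zero_or_pos n with rfl | hn
    · refine ⟨1, ?_, ?_, ?_⟩
      · have hzero : ∀ τ : Equiv.Perm (Fin 0), plen τ = 0 := fun τ => by simp [plen]
        simp [IsNC, hzero]
      · intro j _; exact absurd j.isLt (by omega)
      · intro k; exact absurd k.isLt (by omega)
    · have h1 : ∀ k : Fin n, π (dbl2 k) = MyAux.wd k := by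
        intro k
        have hodd : Odd ((MyAux.wd k).val + 1) := by
          rw [MyAux.wd_val, Nat.odd_iff]; omega
        have hfx := hfixhyp (MyAux.wd k) hodd
        rw [Equiv.Perm.mul_apply] at hfx
        have h2 : finRotate (2*n) (π⁻¹ (MyAux.wd k)) = finRotate (2*n) (dbl2 k) := by
          rw [hfx]; rfl
        have h3 : π⁻¹ (MyAux.wd k) = dbl2 k := (finRotate (2*n)).injective h2
        rw [← h3]; simp
      have himg : ∀ k : Fin n, ∃ j, π (MyAux.wd k) = dbl2 j := by
        intro k
        rcases MyAux.coverage (π (MyAux.wd k)) with ⟨j, hj⟩ | ⟨j, hj⟩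
        · exact ⟨j, hj⟩
        · exfalso
          have heq : π (MyAux.wd k) = π (dbl2 j) := by rw [hj, h1]
          exact MyAux.dbl2_ne_wd j k (π.injective heq).symm
      set f : Fin n → Fin n := fun k => (himg k).choose with hfdef
      have hf : ∀ k, π (MyAux.wd k) = dbl2 (f k) := fun k => (himg k).choose_spec
      have finj : Function.Injective f := by
        intro a b hab
        have : π (MyAux.wd a) = π (MyAux.wd b) := by rw [hf, hf, hab]
        exact MyAux.wd_injective (π.injective this)
      refine ⟨Equiv.ofBijective f ((Finite.injective_iff_bijective).mp finj), ?_, ?_, ?_⟩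
      · -- IsNC σ
        set σ : Equiv.Perm (Fin n) := Equiv.ofBijective f ((Finite.injective_iff_bijective).mp finj) with hσdef
        have hσapp : ∀ k, σ k = f k := fun _ => rfl
        have hclause2 : ∀ k, (π ^ 2) (dbl2 k) = dbl2 (σ k) := by
          intro k
          rw [pow_two, Equiv.Perm.mul_apply, h1, hf]
          rfl
        have hA : numCycles (finRotate (2*n)) = 1 := MyAux.numCycles_finRotate (by omega)
        have hB : numCycles (finRotate n) = 1 := MyAux.numCycles_finRotate hn
        have hπσ : numCycles π = numCycles σ := by
          apply MyAux.numCycles_double π σ dbl2 MyAux.dbl2_injective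
          · intro k
            rw [h1, hf]; rfl
          · intro x
            rcases MyAux.coverage x with ⟨k, rfl⟩ | ⟨k, rfl⟩
            · exact ⟨k, Equiv.Perm.SameCycle.refl _ _⟩
            · refine ⟨σ k, 1, ?_⟩
              rw [zpow_one, hf]
              rfl
          · intro m k j
            have hp : (π ^ (2*m)) (dbl2 k) = dbl2 ((σ ^ m) k) := by
              have := MyAux.pow_transfer (π := π^2) (ρ := σ) (e := dbl2) hclause2 m k
              rwa [← pow_mul] at this
            rw [pow_succ', Equiv.Perm.mul_apply, hp, h1]
            exact fun h => MyAux.dbl2_ne_wd j _ h.symm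
        have hτ : numCycles (π⁻¹ * finRotate (2*n)) =
            (2*n - n) + numCycles (σ⁻¹ * finRotate n) := by
          apply MyAux.numCycles_split _ _ MyAux.wd MyAux.wd_injective
          · intro k
            rw [Equiv.Perm.mul_apply, MyAux.gamma_wd]
            have hkey : π (MyAux.wd (σ⁻¹ (finRotate n k))) = dbl2 (finRotate n k) := by
              rw [hf]
              exact congrArg dbl2 (σ.apply_symm_apply _)
            rw [← hkey, Equiv.Perm.inv_def π, Equiv.symm_apply_apply]
            rfl
          · intro x hx
            have hxd : ∃ k, x = dbl2 k := by
              rcases MyAux.coverage x with h | ⟨k, rfl⟩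
              · exact h
              · exact absurd rfl (hx k)
            obtain ⟨k, rfl⟩ := hxd
            rw [Equiv.Perm.mul_apply]
            have hg : finRotate (2*n) (dbl2 k) = MyAux.wd k := rfl
            rw [hg, ← h1 k, Equiv.Perm.inv_def π, Equiv.symm_apply_apply]
        have hle1 : numCycles σ ≤ n := MyAux.numCycles_le σ
        have hle2 : numCycles (σ⁻¹ * finRotate n) ≤ n := MyAux.numCycles_le _
        unfold IsNC plen at hNC ⊢
        rw [hA, hπσ, hτ] at hNC
        rw [hB]
        omega
      · -- IsDouble clause 1
        intro j hj
        rcases MyAux.coverage j with ⟨k, rfl⟩ | ⟨k, rfl⟩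
        · rw [h1]; rfl
        · exfalso
          rw [MyAux.wd_val, Nat.even_iff] at hj
          omega
      · -- IsDouble clause 2
        intro k
        rw [pow_two, Equiv.Perm.mul_apply, h1, hf]
        rfl
  · -- backward direction
    intro σ _hσ π hdouble
    rcases Nat.eq_zero_or_pos n with rfl | hn
    · constructor
      · intro k; exact absurd k.isLt (by omega)
      · intro j _; exact absurd j.isLt (by omega)
    · obtain ⟨c1, c2⟩ := hdouble
      have h1 : ∀ k : Fin n, π (dbl2 k) = MyAux.wd k := by
        intro k
        have hev : Even ((dbl2 k).val + 1) := by
          rw [MyAux.dbl2_val, Nat.even_iff]; omega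
        exact c1 (dbl2 k) hev
      have h2 : ∀ k : Fin n, π (MyAux.wd k) = dbl2 (σ k) := by
        intro k
        have := c2 k
        rwa [pow_two, Equiv.Perm.mul_apply, h1] at this
      constructor
      · -- EvenCycles
        have hflip : ∀ x : Fin (2*n), Odd x.val ↔ ¬ Odd (π x).val := by
          intro x
          rcases MyAux.coverage x with ⟨k, rfl⟩ | ⟨k, rfl⟩
          · rw [h1, MyAux.dbl2_val, MyAux.wd_val, Nat.odd_iff, Nat.odd_iff]
            omega
          · rw [h2, MyAux.dbl2_val, MyAux.wd_val, Nat.odd_iff, Nat.odd_iff]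
            omega
        intro k
        exact MyAux.evenCycles_of_flip π hflip k
      · -- fixing odd labels
        intro j hj
        rcases MyAux.coverage j with ⟨k, rfl⟩ | ⟨k, rfl⟩
        · exfalso
          rw [MyAux.dbl2_val, Nat.odd_iff] at hj
          omega
        · rw [Equiv.Perm.mul_apply]
          have h3 : π⁻¹ (MyAux.wd k) = dbl2 k := by
            rw [← h1 k, Equiv.Perm.inv_def π, Equiv.symm_apply_apply]
          rw [h3]
          rfl
end

section
/- For partitioned permutations of {1,…,n}, the length function |(𝒰, π)| := 2|𝒰| − |π| satisfies the triangle inequality: |(𝒰∨𝒱, πσ)| ≤ |(𝒰, π)| + |(𝒱, σ)| for all partitioned permutations (𝒰, π) and (𝒱, σ). -/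
open Equiv Finset
open scoped Classical

noncomputable def blen {n : ℕ} (U : Setoid (Fin n)) : ℕ := n - Nat.card (Quotient U)

noncomputable def pplen {n : ℕ} (U : Setoid (Fin n)) (π : Equiv.Perm (Fin n)) : ℤ :=
  2 * (blen U : ℤ) - (plen π : ℤ)

namespace Stmt19Aux

open Equiv Equiv.Perm Finset

variable {n : ℕ}

/-- The setoid on `Fin n` given by the same-cycle relation of a permutation. -/
def cycS (π : Perm (Fin n)) : Setoid (Fin n) :=
  ⟨π.SameCycle, ⟨fun x => ⟨0, by simp⟩, fun h => h.symm, fun h1 h2 => h1.trans h2⟩⟩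

lemma cycS_rel {π : Perm (Fin n)} {x y : Fin n} : cycS π x y ↔ π.SameCycle x y := Iff.rfl

/-- The setoid identifying exactly `a` and `b`. -/
def pairS (a b : Fin n) : Setoid (Fin n) :=
  ⟨fun x y => x = y ∨ (x = a ∧ y = b) ∨ (x = b ∧ y = a), by
    refine ⟨fun x => Or.inl rfl, fun {x y} h => ?_, fun {x y z} h1 h2 => ?_⟩ <;> aesop⟩

lemma pairS_rel_ab (a b : Fin n) : pairS a b a b := Or.inr (Or.inl ⟨rfl, rfl⟩)

lemma pairS_le {S : Setoid (Fin n)} {a b : Fin n} (h : S a b) : pairS a b ≤ S := by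
  rintro x y (rfl | ⟨rfl, rfl⟩ | ⟨rfl, rfl⟩)
  · exact S.refl' x
  · exact h
  · exact S.symm' h

noncomputable def nb (S : Setoid (Fin n)) : ℕ := Nat.card (Quotient S)

lemma nb_antitone {S T : Setoid (Fin n)} (h : S ≤ T) : nb T ≤ nb S := by
  have hs : Function.Surjective
      (fun q : Quotient S => Quotient.liftOn q (fun x => Quotient.mk T x)
        (fun a b hab => Quotient.sound (h hab))) := by
    intro q
    obtain ⟨x, rfl⟩ := Quot.exists_rep q
    exact ⟨Quotient.mk S x, rfl⟩
  exact Nat.card_le_card_of_surjective _ hs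

lemma nb_le (S : Setoid (Fin n)) : nb S ≤ n := by
  have hs : Function.Surjective (Quotient.mk S) := fun q => Quot.exists_rep q
  have h2 : Nat.card (Fin n) = n := by simp
  have h3 := Nat.card_le_card_of_surjective _ hs
  rw [h2] at h3
  exact h3

/-- Characterization of the join with a pair setoid. -/
lemma sup_pairS_rel {S : Setoid (Fin n)} {a b x y : Fin n} :
    (S ⊔ pairS a b) x y ↔ S x y ∨ (S x a ∧ S b y) ∨ (S x b ∧ S a y) := by
  constructor
  · intro h
    let R : Setoid (Fin n) :=
      ⟨fun x y => S x y ∨ (S x a ∧ S b y) ∨ (S x b ∧ S a y), by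
        refine ⟨fun x => Or.inl (S.refl' x), ?_, ?_⟩
        · rintro x y (h | ⟨h1, h2⟩ | ⟨h1, h2⟩)
          exacts [Or.inl (S.symm' h), Or.inr (Or.inr ⟨S.symm' h2, S.symm' h1⟩),
            Or.inr (Or.inl ⟨S.symm' h2, S.symm' h1⟩)]
        · rintro x y z (h | ⟨h1, h2⟩ | ⟨h1, h2⟩) (h' | ⟨h1', h2'⟩ | ⟨h1', h2'⟩)
          · exact Or.inl (S.trans' h h')
          · exact Or.inr (Or.inl ⟨S.trans' h h1', h2'⟩)
          · exact Or.inr (Or.inr ⟨S.trans' h h1', h2'⟩)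
          · exact Or.inr (Or.inl ⟨h1, S.trans' h2 h'⟩)
          · exact Or.inl (S.trans' (S.trans' h1 (S.trans' (S.symm' h1') (S.symm' h2))) h2')
          · exact Or.inl (S.trans' h1 h2')
          · exact Or.inr (Or.inr ⟨h1, S.trans' h2 h'⟩)
          · exact Or.inl (S.trans' h1 h2')
          · exact Or.inl (S.trans' (S.trans' h1 (S.trans' (S.symm' h1') (S.symm' h2))) h2')⟩
    have hle : S ⊔ pairS a b ≤ R := by
      refine sup_le (fun x y hxy => Or.inl hxy) ?_
      rintro x y (rfl | ⟨rfl, rfl⟩ | ⟨rfl, rfl⟩)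
      · exact Or.inl (S.refl' x)
      · exact Or.inr (Or.inl ⟨S.refl' _, S.refl' _⟩)
      · exact Or.inr (Or.inr ⟨S.refl' _, S.refl' _⟩)
    exact hle h
  · have hS : S ≤ S ⊔ pairS a b := le_sup_left
    have hP : pairS a b ≤ S ⊔ pairS a b := le_sup_right
    have hab : (S ⊔ pairS a b) a b := hP (pairS_rel_ab a b)
    rintro (h | ⟨h1, h2⟩ | ⟨h1, h2⟩)
    · exact hS h
    · exact (S ⊔ pairS a b).trans' (hS h1) ((S ⊔ pairS a b).trans' hab (hS h2))
    · exact (S ⊔ pairS a b).trans' (hS h1)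
        ((S ⊔ pairS a b).trans' ((S ⊔ pairS a b).symm' hab) (hS h2))

/-- Joining in one extra pair decreases the number of classes by at most one. -/
lemma nb_le_nb_sup_pairS (S : Setoid (Fin n)) (a b : Fin n) :
    nb S ≤ nb (S ⊔ pairS a b) + 1 := by
  set T := S ⊔ pairS a b with hT
  let g : Fin n → Option (Quotient T) :=
    fun x => if S x b ∧ ¬ S a b then none else some (Quotient.mk T x)
  have hresp : ∀ x y, S x y → g x = g y := by
    intro x y hxy
    have h1 : (S x b ∧ ¬ S a b) ↔ (S y b ∧ ¬ S a b) := by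
      constructor
      · rintro ⟨h, h'⟩; exact ⟨S.trans' (S.symm' hxy) h, h'⟩
      · rintro ⟨h, h'⟩; exact ⟨S.trans' hxy h, h'⟩
    by_cases hc : S x b ∧ ¬ S a b
    · simp only [g, if_pos hc, if_pos (h1.mp hc)]
    · simp only [g, if_neg hc, if_neg (fun hc' => hc (h1.mpr hc'))]
      exact congrArg _ (Quotient.sound (le_sup_left (α := Setoid (Fin n)) hxy))
  let G : Quotient S → Option (Quotient T) := Quotient.lift g hresp
  have hGinj : Function.Injective G := by
    intro q q'
    induction q using Quotient.ind
    induction q' using Quotient.ind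
    rename_i x y
    intro hxy
    have hxy' : g x = g y := hxy
    apply Quotient.sound
    by_cases hx : S x b ∧ ¬ S a b <;> by_cases hy : S y b ∧ ¬ S a b
    · exact S.trans' hx.1 (S.symm' hy.1)
    · simp [g, if_pos hx, if_neg hy] at hxy'
    · simp [g, if_neg hx, if_pos hy] at hxy'
    · simp only [g, if_neg hx, if_neg hy, Option.some.injEq] at hxy'
      have hrel : T x y := Quotient.exact hxy'
      rcases sup_pairS_rel.mp hrel with h | ⟨h1, h2⟩ | ⟨h1, h2⟩
      · exact h
      · -- S x a, S b y
        have hSab : S a b := by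
          by_contra hno
          exact hy ⟨S.symm' h2, hno⟩
        exact S.trans' h1 (S.trans' hSab (S.symm' (S.symm' h2)))
      · -- S x b, S a y
        have hSab : S a b := by
          by_contra hno
          exact hx ⟨h1, hno⟩
        exact S.trans' h1 (S.trans' (S.symm' hSab) h2)
  have := Nat.card_le_card_of_injective G hGinj
  have hopt : Nat.card (Option (Quotient T)) = Nat.card (Quotient T) + 1 := by
    have : Fintype (Quotient T) := Fintype.ofFinite _
    simp [Nat.card_eq_fintype_card]
  rw [hopt] at this
  exact this

/-- Joining in a pair not yet related strictly decreases the number of classes. -/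
lemma nb_sup_pairS_lt {S : Setoid (Fin n)} {a b : Fin n} (h : ¬ S a b) :
    nb (S ⊔ pairS a b) < nb S := by
  set T := S ⊔ pairS a b with hT
  let F : Quotient S → Quotient T :=
    Quotient.lift (fun x => Quotient.mk T x)
      (fun x y hxy => Quotient.sound (le_sup_left (α := Setoid (Fin n)) hxy))
  have hFs : Function.Surjective F := by
    intro q; obtain ⟨x, rfl⟩ := Quot.exists_rep q; exact ⟨Quotient.mk S x, rfl⟩
  have hFni : ¬ Function.Injective F := by
    intro hinj
    have : Quotient.mk S a = Quotient.mk S b := by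
      apply hinj
      exact Quotient.sound (le_sup_right (α := Setoid (Fin n)) (pairS_rel_ab a b))
    exact h (Quotient.exact this)
  have : Fintype (Quotient S) := Fintype.ofFinite _
  have : Fintype (Quotient T) := Fintype.ofFinite _
  rw [nb, nb, Nat.card_eq_fintype_card, Nat.card_eq_fintype_card]
  exact Fintype.card_lt_of_surjective_not_injective F hFs hFni

lemma cycS_le {ρ : Perm (Fin n)} {S : Setoid (Fin n)} (h : ∀ x, S x (ρ x)) :
    cycS ρ ≤ S := by
  intro x y hxy
  obtain ⟨k, hk⟩ := hxy
  subst hk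
  induction k using Int.induction_on with
  | zero => simpa using S.refl' x
  | succ i ih =>
    have hstep : (ρ ^ ((i : ℤ) + 1)) x = ρ ((ρ ^ (i : ℤ)) x) := by
      rw [add_comm, zpow_add, zpow_one]; rfl
    rw [hstep]
    exact S.trans' ih (h _)
  | pred i ih =>
    have hstep : (ρ ^ ((-i : ℤ) - 1)) x = ρ⁻¹ ((ρ ^ (-i : ℤ)) x) := by
      rw [sub_eq_add_neg, add_comm, zpow_add, zpow_neg_one]; rfl
    rw [hstep]
    refine S.trans' ih (S.symm' ?_)
    have := h (ρ⁻¹ ((ρ ^ (-i : ℤ)) x))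
    rwa [Equiv.Perm.coe_inv, Equiv.apply_symm_apply] at this

lemma pairS_swap_apply (a b x : Fin n) : pairS a b x (swap a b x) := by
  rcases eq_or_ne x a with rfl | hxa
  · rw [swap_apply_left]; exact Or.inr (Or.inl ⟨rfl, rfl⟩)
  rcases eq_or_ne x b with rfl | hxb
  · rw [swap_apply_right]; exact Or.inr (Or.inr ⟨rfl, rfl⟩)
  · rw [swap_apply_of_ne_of_ne hxa hxb]

lemma sameCycle_apply (ρ : Perm (Fin n)) (x : Fin n) : ρ.SameCycle x (ρ x) :=
  ⟨1, by simp⟩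

lemma cycS_mul_swap (ρ : Perm (Fin n)) (a b : Fin n) :
    cycS (ρ * swap a b) ⊔ pairS a b = cycS ρ ⊔ pairS a b := by
  apply le_antisymm
  · refine sup_le ?_ le_sup_right
    apply cycS_le
    intro x
    have h1 : (cycS ρ ⊔ pairS a b) x (swap a b x) :=
      le_sup_right (α := Setoid (Fin n)) (pairS_swap_apply a b x)
    have h2 : (cycS ρ ⊔ pairS a b) (swap a b x) (ρ (swap a b x)) :=
      le_sup_left (α := Setoid (Fin n)) (sameCycle_apply ρ (swap a b x))
    have := (cycS ρ ⊔ pairS a b).trans' h1 h2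
    simpa [Equiv.Perm.mul_apply] using this
  · refine sup_le ?_ le_sup_right
    apply cycS_le
    intro x
    set T := cycS (ρ * swap a b) ⊔ pairS a b with hT
    have h1 : T x (swap a b x) := le_sup_right (α := Setoid (Fin n)) (pairS_swap_apply a b x)
    have h2 : T (swap a b x) ((ρ * swap a b) (swap a b x)) :=
      le_sup_left (α := Setoid (Fin n)) (sameCycle_apply _ _)
    have h3 : (ρ * swap a b) (swap a b x) = ρ x := by
      simp [Equiv.Perm.mul_apply]
    rw [h3] at h2
    exact T.trans' h1 h2

lemma cycS_swap_mul (ρ : Perm (Fin n)) (a b : Fin n) :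
    cycS (swap a b * ρ) ⊔ pairS a b = cycS ρ ⊔ pairS a b := by
  apply le_antisymm
  · refine sup_le ?_ le_sup_right
    apply cycS_le
    intro x
    set T := cycS ρ ⊔ pairS a b with hT
    have h1 : T x (ρ x) := le_sup_left (α := Setoid (Fin n)) (sameCycle_apply ρ x)
    have h2 : T (ρ x) (swap a b (ρ x)) :=
      le_sup_right (α := Setoid (Fin n)) (pairS_swap_apply a b (ρ x))
    have := T.trans' h1 h2
    simpa [Equiv.Perm.mul_apply] using this
  · refine sup_le ?_ le_sup_right
    apply cycS_le
    intro x
    set T := cycS (swap a b * ρ) ⊔ pairS a b with hT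
    have h1 : T x ((swap a b * ρ) x) := le_sup_left (α := Setoid (Fin n)) (sameCycle_apply _ _)
    have h2 : T ((swap a b * ρ) x) (swap a b ((swap a b * ρ) x)) :=
      le_sup_right (α := Setoid (Fin n)) (pairS_swap_apply a b _)
    have h3 : swap a b ((swap a b * ρ) x) = ρ x := by
      simp [Equiv.Perm.mul_apply]
    rw [h3] at h2
    exact T.trans' h1 h2

lemma sameCycle_eq_of_fixed {ρ : Perm (Fin n)} {x y : Fin n} (h : ρ x = x)
    (hxy : ρ.SameCycle x y) : x = y := by
  obtain ⟨k, hk⟩ := hxy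
  rw [zpow_apply_eq_self_of_apply_eq_self h k] at hk
  exact hk

/-- Merging: if `a`, `b` are in different cycles of `π`, then they are in the
same cycle of `π * swap a b`. -/
lemma sameCycle_mul_swap_of_not {π : Perm (Fin n)} {a b : Fin n}
    (h : ¬ π.SameCycle a b) : (π * swap a b).SameCycle a b := by
  set π' := π * swap a b with hπ'
  have hπ'b : π' b = π a := by
    simp [hπ', Equiv.Perm.mul_apply]
  have key : ∀ k : ℕ,
      (∃ j : ℕ, 1 ≤ j ∧ (π' ^ j) b = a) ∨ (π' ^ (k + 1)) b = (π ^ (k + 1)) a := by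
    intro k
    induction k with
    | zero => right; simpa using hπ'b
    | succ k ih =>
      rcases ih with ⟨j, hj1, hj2⟩ | ih
      · exact Or.inl ⟨j, hj1, hj2⟩
      by_cases hfix : (π ^ (k + 1)) a = a
      · exact Or.inl ⟨k + 1, by omega, by rw [ih, hfix]⟩
      right
      have hnb : (π ^ (k + 1)) a ≠ b := by
        intro hb
        exact h ⟨(k + 1 : ℕ), by rw [zpow_natCast]; exact hb⟩
      have e1 : (π' ^ (k + 1 + 1)) b = π' ((π' ^ (k + 1)) b) := by
        rw [pow_succ']; rfl
      have e2 : (π ^ (k + 1 + 1)) a = π ((π ^ (k + 1)) a) := by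
        rw [pow_succ']; rfl
      rw [e1, e2, ih, hπ']
      simp only [Equiv.Perm.mul_apply]
      rw [swap_apply_of_ne_of_ne hfix hnb]
  have hord : 1 ≤ orderOf π := orderOf_pos π
  obtain ⟨j, hj1, hj2⟩ : ∃ j : ℕ, 1 ≤ j ∧ (π' ^ j) b = a := by
    rcases key (orderOf π - 1) with hl | hr
    · exact hl
    · refine ⟨orderOf π - 1 + 1, by omega, ?_⟩
      rw [hr]
      have : orderOf π - 1 + 1 = orderOf π := by omega
      rw [this, pow_orderOf_eq_one]
      rfl
  have hba : π'.SameCycle b a := ⟨(j : ℤ), by rw [zpow_natCast]; exact hj2⟩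
  exact hba.symm

lemma numCycles_eq_nb (π : Perm (Fin n)) : numCycles π = nb (cycS π) := by
  classical
  let f : Fin n → {x : Fin n // π x = x} ⊕ {c : Perm (Fin n) // c ∈ π.cycleFactorsFinset} :=
    fun x => if h : π x = x then Sum.inl ⟨x, h⟩ else
      Sum.inr ⟨π.cycleOf x, by
        rw [Equiv.Perm.cycleOf_mem_cycleFactorsFinset_iff, Equiv.Perm.mem_support]; exact h⟩
  have hresp : ∀ x y, π.SameCycle x y → f x = f y := by
    intro x y hxy
    by_cases hx : π x = x
    · have hxy' : x = y := sameCycle_eq_of_fixed hx hxy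
      subst hxy'; rfl
    · have hy : ¬ π y = y := by
        intro hy
        apply hx
        have h2 : y = x := sameCycle_eq_of_fixed hy hxy.symm
        rw [← h2]; exact hy
      simp only [f, dif_neg hx, dif_neg hy]
      exact congrArg _ (Subtype.ext hxy.cycleOf_eq)
  let F : Quotient (cycS π) → _ := Quotient.lift f hresp
  have hbij : Function.Bijective F := by
    constructor
    · intro q q'
      induction q using Quotient.ind
      induction q' using Quotient.ind
      rename_i x y
      intro hxy
      have hfxy : f x = f y := hxy
      apply Quotient.sound
      show π.SameCycle x y
      by_cases hx : π x = x <;> by_cases hy : π y = y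
      · simp only [f, dif_pos hx, dif_pos hy, Sum.inl.injEq, Subtype.mk.injEq] at hfxy
        exact hfxy ▸ ⟨0, by simp⟩
      · simp only [f, dif_pos hx, dif_neg hy] at hfxy
        cases hfxy
      · simp only [f, dif_neg hx, dif_pos hy] at hfxy
        cases hfxy
      · simp only [f, dif_neg hx, dif_neg hy, Sum.inr.injEq, Subtype.mk.injEq] at hfxy
        have hy' : y ∈ (π.cycleOf x).support := by
          rw [hfxy, Equiv.Perm.mem_support_cycleOf_iff]
          exact ⟨⟨0, by simp⟩, Equiv.Perm.mem_support.mpr hy⟩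
        exact (Equiv.Perm.mem_support_cycleOf_iff.mp hy').1
    · rintro (⟨x, hx⟩ | ⟨c, hc⟩)
      · exact ⟨Quotient.mk _ x, by show f x = _; simp only [f, dif_pos hx]⟩
      · have hc1 := (Equiv.Perm.mem_cycleFactorsFinset_iff.mp hc).1
        have hne : c.support.Nonempty := by
          rw [Finset.nonempty_iff_ne_empty, Ne, Equiv.Perm.support_eq_empty_iff]
          exact hc1.ne_one
        obtain ⟨x, hxs⟩ := hne
        have hcx : c = π.cycleOf x := Equiv.Perm.cycle_is_cycleOf hxs hc
        have hπx : ¬ π x = x := by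
          have h1 : c x ≠ x := Equiv.Perm.mem_support.mp hxs
          have h2 : c x = π x := (Equiv.Perm.mem_cycleFactorsFinset_iff.mp hc).2 x hxs
          rw [h2] at h1; exact h1
        refine ⟨Quotient.mk _ x, ?_⟩
        show f x = _
        simp only [f, dif_neg hπx]
        exact congrArg _ (Subtype.ext hcx.symm)
  have hcard := Nat.card_eq_of_bijective F hbij
  have h1 : Nat.card ({x : Fin n // π x = x} ⊕ {c : Perm (Fin n) // c ∈ π.cycleFactorsFinset})
      = (univ.filter fun x => π x = x).card + π.cycleFactorsFinset.card := by
    rw [Nat.card_sum]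
    congr 1
    · rw [Nat.card_eq_fintype_card, Fintype.card_subtype]
    · rw [Nat.card_eq_fintype_card, Fintype.card_coe]
  have h2 : π.cycleType.card = π.cycleFactorsFinset.card := by
    rw [Equiv.Perm.cycleType_def, Multiset.card_map]
    rfl
  rw [numCycles, nb, hcard, h1, h2]
  omega

lemma fixed_iff_forall {π : Perm (Fin n)} {x : Fin n} :
    π x = x ↔ ∀ y, π.SameCycle x y → y = x := by
  constructor
  · intro h y hy
    exact (sameCycle_eq_of_fixed h hy).symm
  · intro h
    exact h (π x) (sameCycle_apply π x)

lemma sign_eq_of_cycS_eq {π π' : Perm (Fin n)} (h : cycS π = cycS π') :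
    Perm.sign π = Perm.sign π' := by
  have hrel : π.SameCycle = π'.SameCycle :=
    congrArg (fun S : Setoid (Fin n) => S.r) h
  have hfix : ∀ x, π x = x ↔ π' x = x := by
    intro x
    rw [fixed_iff_forall, fixed_iff_forall, hrel]
  have hsupp : π.support = π'.support := by
    ext x
    simp only [Equiv.Perm.mem_support]
    exact not_congr (hfix x)
  have hfilter : (univ.filter fun x => π x = x) = (univ.filter fun x => π' x = x) := by
    ext x
    simp [hfix x]
  have hnum : numCycles π = numCycles π' := by
    rw [numCycles_eq_nb, numCycles_eq_nb, h]
  have hsum : π.cycleType.sum = π'.cycleType.sum := by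
    rw [Equiv.Perm.sum_cycleType, Equiv.Perm.sum_cycleType, hsupp]
  have hcard : π.cycleType.card = π'.cycleType.card := by
    rw [numCycles, numCycles, hfilter] at hnum
    omega
  rw [Equiv.Perm.sign_of_cycleType, Equiv.Perm.sign_of_cycleType, hsum, hcard]

lemma not_sameCycle_mul_swap {π : Perm (Fin n)} {a b : Fin n} (hab : a ≠ b)
    (h : π.SameCycle a b) : ¬ (π * swap a b).SameCycle a b := by
  intro h'
  have e1 : cycS (π * swap a b) = cycS π := by
    have hs := cycS_mul_swap π a b
    rwa [sup_eq_left.mpr (pairS_le (h' : cycS (π * swap a b) a b)),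
      sup_eq_left.mpr (pairS_le (h : cycS π a b))] at hs
  have hsign := sign_eq_of_cycS_eq e1
  rw [Equiv.Perm.sign_mul, Equiv.Perm.sign_swap hab] at hsign
  have h2 : Equiv.Perm.sign π * (-1) = Equiv.Perm.sign π * 1 := by
    rw [mul_one]
    exact hsign
  have h3 := mul_left_cancel h2
  simp at h3

lemma nb_cycS_le_mul_swap (ρ : Perm (Fin n)) (a b : Fin n) :
    nb (cycS ρ) ≤ nb (cycS (ρ * swap a b)) + 1 := by
  have h1 := nb_le_nb_sup_pairS (cycS ρ) a b
  rw [← cycS_mul_swap ρ a b] at h1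
  have h2 := nb_antitone (le_sup_left : cycS (ρ * swap a b) ≤ cycS (ρ * swap a b) ⊔ pairS a b)
  omega

lemma nb_lt_split {ρ ρ' : Perm (Fin n)} {a b : Fin n}
    (hsup : cycS ρ' ⊔ pairS a b = cycS ρ ⊔ pairS a b)
    (hρ : ρ.SameCycle a b) (hρ' : ¬ ρ'.SameCycle a b) :
    nb (cycS ρ) < nb (cycS ρ') := by
  have h0 : cycS ρ ⊔ pairS a b = cycS ρ := sup_eq_left.mpr (pairS_le hρ)
  have hlt := nb_sup_pairS_lt (S := cycS ρ') (a := a) (b := b) hρ'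
  rwa [hsup, h0] at hlt

lemma cycS_one_le (S : Setoid (Fin n)) : cycS (1 : Perm (Fin n)) ≤ S := by
  intro x y hxy
  have : x = y := Equiv.Perm.sameCycle_one.mp hxy
  exact this ▸ S.refl' x

lemma nb_cycS_one : nb (cycS (1 : Perm (Fin n))) = n := by
  have hbij : Function.Bijective (Quotient.mk (cycS (1 : Perm (Fin n)))) := by
    constructor
    · intro x y hxy
      exact Equiv.Perm.sameCycle_one.mp (Quotient.exact hxy)
    · exact fun q => Quot.exists_rep q
  rw [nb, ← Nat.card_eq_of_bijective _ hbij]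
  simp

lemma genus : ∀ k : ℕ, ∀ π σ : Perm (Fin n), σ.support.card ≤ k →
    nb (cycS π) + nb (cycS σ) + nb (cycS (π * σ)) ≤ n + 2 * nb (cycS π ⊔ cycS σ) := by
  intro k
  induction k with
  | zero =>
    intro π σ hk
    have hσ : σ = 1 := by
      rw [← Equiv.Perm.support_eq_empty_iff]
      exact Finset.card_eq_zero.mp (le_antisymm hk (Nat.zero_le _))
    subst hσ
    rw [mul_one, nb_cycS_one, sup_eq_left.mpr (cycS_one_le _)]
    have := nb_le (cycS π)
    omega
  | succ k IH =>
    intro π σ hk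
    by_cases h1 : σ = 1
    · subst h1
      rw [mul_one, nb_cycS_one, sup_eq_left.mpr (cycS_one_le _)]
      have := nb_le (cycS π)
      omega
    · obtain ⟨a, ha⟩ : ∃ a, σ a ≠ a := by
        by_contra hall
        push_neg at hall
        apply h1
        ext x
        simp [hall x]
      set b := σ a with hb
      have hab : a ≠ b := fun hc => ha hc.symm
      set τ := Equiv.swap a b with hτ
      set σ' := τ * σ with hσ'd
      set π' := π * τ with hπ'd
      have hττ : τ * τ = 1 := by rw [hτ]; exact Equiv.swap_mul_self a b
      have hprod : π' * σ' = π * σ := by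
        rw [hπ'd, hσ'd, mul_assoc, ← mul_assoc τ τ σ, hττ, one_mul]
      have hσ'a : σ' a = a := by
        rw [hσ'd]
        simp only [Equiv.Perm.mul_apply, ← hb, hτ]
        exact Equiv.swap_apply_right a b
      have hsub : σ'.support ⊆ σ.support := by
        intro x hx
        rw [Equiv.Perm.mem_support] at hx ⊢
        intro hσx
        apply hx
        have hxa : x ≠ a := by
          intro hc
          rw [hc] at hσx
          exact ha hσx
        have hxb : x ≠ b := by
          intro hc
          rw [hc, hb] at hσx
          exact ha (σ.injective hσx)
        rw [hσ'd]
        simp only [Equiv.Perm.mul_apply, hσx, hτ]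
        exact Equiv.swap_apply_of_ne_of_ne hxa hxb
      have hsupp : σ'.support.card ≤ k := by
        have hanotin : a ∉ σ'.support := by
          simp [Equiv.Perm.mem_support, hσ'a]
        have hain : a ∈ σ.support := Equiv.Perm.mem_support.mpr ha
        have hss : σ'.support ⊂ σ.support :=
          (Finset.ssubset_iff_of_subset hsub).mpr ⟨a, hain, hanotin⟩
        have := Finset.card_lt_card hss
        omega
      have hScσab : σ.SameCycle a b := ⟨1, by simp [hb]⟩
      have hPσ : pairS a b ≤ cycS σ := pairS_le hScσab
      have hσ'nc : ¬ σ'.SameCycle a b := fun hc => hab (sameCycle_eq_of_fixed hσ'a hc)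
      have hcσ : nb (cycS σ) < nb (cycS σ') := by
        refine nb_lt_split ?_ hScσab hσ'nc
        rw [hσ'd, hτ]
        exact cycS_swap_mul σ a b
      have hJ : (cycS π' ⊔ cycS σ') ⊔ pairS a b = cycS π ⊔ cycS σ := by
        have e1 : cycS π' ⊔ pairS a b = cycS π ⊔ pairS a b := by
          rw [hπ'd, hτ]; exact cycS_mul_swap π a b
        have e2 : cycS σ' ⊔ pairS a b = cycS σ ⊔ pairS a b := by
          rw [hσ'd, hτ]; exact cycS_swap_mul σ a b
        calc (cycS π' ⊔ cycS σ') ⊔ pairS a b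
            = (cycS π' ⊔ pairS a b) ⊔ (cycS σ' ⊔ pairS a b) := by
              rw [sup_sup_sup_comm, sup_idem]
          _ = (cycS π ⊔ pairS a b) ⊔ (cycS σ ⊔ pairS a b) := by rw [e1, e2]
          _ = (cycS π ⊔ cycS σ) ⊔ pairS a b := by rw [sup_sup_sup_comm, sup_idem]
          _ = cycS π ⊔ cycS σ := sup_eq_left.mpr (le_trans hPσ le_sup_right)
      have hIH := IH π' σ' hsupp
      rw [hprod] at hIH
      by_cases hmc : π.SameCycle a b
      · -- split case
        have hπ'nc : ¬ π'.SameCycle a b := by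
          rw [hπ'd, hτ]
          exact not_sameCycle_mul_swap hab hmc
        have hcπ : nb (cycS π) < nb (cycS π') := by
          refine nb_lt_split ?_ hmc hπ'nc
          rw [hπ'd, hτ]
          exact cycS_mul_swap π a b
        have horb : nb (cycS π' ⊔ cycS σ') ≤ nb (cycS π ⊔ cycS σ) + 1 := by
          have h3 := nb_le_nb_sup_pairS (cycS π' ⊔ cycS σ') a b
          rwa [hJ] at h3
        omega
      · -- merge case
        have hπ'c : π'.SameCycle a b := by
          rw [hπ'd, hτ]
          exact sameCycle_mul_swap_of_not hmc
        have horb : nb (cycS π' ⊔ cycS σ') = nb (cycS π ⊔ cycS σ) := by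
          rw [← hJ, sup_eq_left.mpr
            (pairS_le (le_sup_left (α := Setoid (Fin n)) hπ'c : (cycS π' ⊔ cycS σ') a b))]
        have hcπ : nb (cycS π) ≤ nb (cycS π') + 1 := by
          have := nb_cycS_le_mul_swap π a b
          rwa [← hτ, ← hπ'd] at this
        omega

lemma nb_sup_le_aux : ∀ k : ℕ, ∀ A U W : Setoid (Fin n), nb A ≤ k → A ≤ U →
    nb (A ⊔ W) + nb U ≤ nb A + nb (U ⊔ W) := by
  intro k
  induction k with
  | zero =>
    intro A U W hk hAU
    have hA0 : nb A = 0 := Nat.le_zero.mp hk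
    have hempty : IsEmpty (Quotient A) := by
      rcases Nat.card_eq_zero.mp hA0 with h | h
      · exact h
      · exact absurd h (not_infinite_iff_finite.mpr inferInstance)
    have hn0 : IsEmpty (Fin n) := ⟨fun x => hempty.false (Quotient.mk A x)⟩
    have hzero : ∀ S : Setoid (Fin n), nb S = 0 := fun S =>
      Nat.card_eq_zero.mpr (Or.inl ⟨fun q => Quot.inductionOn q fun x => hn0.false x⟩)
    simp [hzero]
  | succ k IH =>
    intro A U W hk hAU
    by_cases hEq : A = U
    · subst hEq; omega
    · have hex : ∃ x y, U x y ∧ ¬ A x y := by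
        by_contra hno
        push_neg at hno
        exact hEq (le_antisymm hAU fun x y hxy => hno x y hxy)
      obtain ⟨x, y, hUxy, hAxy⟩ := hex
      set A' := A ⊔ pairS x y with hA'
      have hA'U : A' ≤ U := sup_le hAU (pairS_le hUxy)
      have hlt : nb A' < nb A := nb_sup_pairS_lt hAxy
      have hIH := IH A' U W (by omega) hA'U
      have h2 : nb (A ⊔ W) ≤ nb (A' ⊔ W) + 1 := by
        have e : A' ⊔ W = (A ⊔ W) ⊔ pairS x y := by
          rw [hA', sup_assoc, sup_comm (pairS x y) W, ← sup_assoc]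
        rw [e]
        exact nb_le_nb_sup_pairS (A ⊔ W) x y
      omega

lemma lat {A B U V : Setoid (Fin n)} (hA : A ≤ U) (hB : B ≤ V) :
    nb (A ⊔ B) + nb U + nb V ≤ nb A + nb B + nb (U ⊔ V) := by
  have h1 := nb_sup_le_aux (nb A) A U B le_rfl hA
  have h2 := nb_sup_le_aux (nb B) B V U le_rfl hB
  rw [sup_comm B U, sup_comm V U] at h2
  omega

end Stmt19Aux

theorem stmt19 {n : ℕ} (U V : Setoid (Fin n)) (π σ : Equiv.Perm (Fin n))
    (hU : ∀ i j, π.SameCycle i j → U.r i j)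
    (hV : ∀ i j, σ.SameCycle i j → V.r i j) :
    pplen (U ⊔ V) (π * σ) ≤ pplen U π + pplen V σ := by
  classical
  have hA : Stmt19Aux.cycS π ≤ U := fun i j h => hU i j h
  have hB : Stmt19Aux.cycS σ ≤ V := fun i j h => hV i j h
  have hG := Stmt19Aux.genus σ.support.card π σ le_rfl
  have hL := Stmt19Aux.lat hA hB
  have hnπ := Stmt19Aux.numCycles_eq_nb π
  have hnσ := Stmt19Aux.numCycles_eq_nb σ
  have hnπσ := Stmt19Aux.numCycles_eq_nb (π * σ)
  have hb1 : Nat.card (Quotient U) ≤ n := Stmt19Aux.nb_le U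
  have hb2 : Nat.card (Quotient V) ≤ n := Stmt19Aux.nb_le V
  have hb3 : Nat.card (Quotient (U ⊔ V)) ≤ n := Stmt19Aux.nb_le (U ⊔ V)
  have hc1 : numCycles π ≤ n := by rw [hnπ]; exact Stmt19Aux.nb_le _
  have hc2 : numCycles σ ≤ n := by rw [hnσ]; exact Stmt19Aux.nb_le _
  have hc3 : numCycles (π * σ) ≤ n := by rw [hnπσ]; exact Stmt19Aux.nb_le _
  simp only [pplen, blen, plen]
  simp only [Stmt19Aux.nb] at hG hL hnπ hnσ hnπσ
  omega
end
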